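/- Consider the modified GSEMO on LOTZ and assume that, in every iteration after the Pareto front is reached in which the population does not cover the whole Pareto front, a good individual is selected as parent with probability at least p_good. Then the expected number of iterations until the population covers the whole Pareto front is at most O(n²/p_good). -/

import Mathlib

noncomputable section
open scoped ENNReal
attribute [local instance] Classical.propDecidable

namespace EMO


/-- A bit string of length `n`. -/
abbrev BitString (n : ℕ) := Fin n → Bool

/-- Number of one-bits. -/
def onesCount {n : ℕ} (x : BitString n) : ℕ :=
  (Finset.univ.filter fun i => x i = true).card

def allOnes (n : ℕ) : BitString n := fun _ => true
def allZeros (n : ℕ) : BitString n := fun _ => false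

/-- The bi-objective function OneMinMax. -/
def OneMinMax {n : ℕ} (x : BitString n) : ℤ × ℤ :=
  ((onesCount x : ℤ), (n : ℤ) - (onesCount x : ℤ))

/-- Number of leading ones. -/
def leadingOnes {n : ℕ} (x : BitString n) : ℕ :=
  (Finset.univ.filter fun i : Fin n => ∀ j : Fin n, j ≤ i → x j = true).card

/-- Number of trailing zeros. -/
def trailingZeros {n : ℕ} (x : BitString n) : ℕ :=
  (Finset.univ.filter fun i : Fin n => ∀ j : Fin n, i ≤ j → x j = false).card

/-- The bi-objective function LOTZ. -/
def LOTZ {n : ℕ} (x : BitString n) : ℤ × ℤ :=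
  ((leadingOnes x : ℤ), (trailingZeros x : ℤ))

/-- `y` dominates `x` (maximisation). -/
def dominates {n : ℕ} (f : BitString n → ℤ × ℤ) (y x : BitString n) : Prop :=
  (f x).1 ≤ (f y).1 ∧ (f x).2 ≤ (f y).2 ∧ f x ≠ f y

/-- `y` weakly dominates `x` (maximisation). -/
def weaklyDominates {n : ℕ} (f : BitString n → ℤ × ℤ) (y x : BitString n) : Prop :=
  (f x).1 ≤ (f y).1 ∧ (f x).2 ≤ (f y).2

/-- Pareto optimality. -/
def paretoOptimal {n : ℕ} (f : BitString n → ℤ × ℤ) (x : BitString n) : Prop :=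
  ¬ ∃ y : BitString n, dominates f y x

/-- A population of mutually non-dominated points. -/
def mutuallyNonDominated {n : ℕ} (f : BitString n → ℤ × ℤ)
    (P : Finset (BitString n)) : Prop :=
  ∀ x ∈ P, ∀ y ∈ P, ¬ dominates f y x

/-- Flip bit `i` of `x`. -/
def flipBit {n : ℕ} (x : BitString n) (i : Fin n) : BitString n :=
  Function.update x i (!x i)

/-- `y` is a Hamming neighbour of `x`. -/
def hammingNeighbour {n : ℕ} (x y : BitString n) : Prop :=
  ∃ i : Fin n, y = flipBit x i

/-- `x` is good relative to population `P`: it is Pareto optimal and has a Pareto-optimal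
Hamming neighbour whose objective vector is not attained by any member of `P`. -/
def isGood {n : ℕ} (f : BitString n → ℤ × ℤ) (P : Finset (BitString n))
    (x : BitString n) : Prop :=
  paretoOptimal f x ∧
    ∃ y : BitString n, hammingNeighbour x y ∧ paretoOptimal f y ∧ ∀ z ∈ P, f z ≠ f y

/-- `x` is bad relative to population `P`. -/
def isBad {n : ℕ} (f : BitString n → ℤ × ℤ) (P : Finset (BitString n))
    (x : BitString n) : Prop :=
  paretoOptimal f x ∧
    ¬ ∃ y : BitString n, hammingNeighbour x y ∧ paretoOptimal f y ∧ ∀ z ∈ P, f z ≠ f y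

/-- `P` covers the whole Pareto front of `f`. -/
def coversFront {n : ℕ} (f : BitString n → ℤ × ℤ) (P : Finset (BitString n)) : Prop :=
  ∀ x : BitString n, paretoOptimal f x → ∃ z ∈ P, f z = f x

/-- The hypervolume contribution of `x` to `P` (for a population of mutually
non-dominated points, with reference point `r`). -/
def HVC {n : ℕ} (f : BitString n → ℤ × ℤ) (r : ℤ × ℤ) (x : BitString n)
    (P : Finset (BitString n)) : ℤ :=
  ((f x).1 - (WithBot.unbotD r.1 ((P.filter fun z => (f z).1 < (f x).1).image fun z => (f z).1).max)) *
  ((f x).2 - (WithBot.unbotD r.2 ((P.filter fun z => (f z).2 < (f x).2).image fun z => (f z).2).max))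

/-- Crowding distance of `x` in `P` with respect to a single objective `g`: infinite for the
boundary points, and otherwise the normalised difference between successor and predecessor. -/
def CDCobj {n : ℕ} (g : BitString n → ℤ) (x : BitString n)
    (P : Finset (BitString n)) : ℝ≥0∞ :=
  if (∀ z ∈ P, g x ≤ g z) ∨ (∀ z ∈ P, g z ≤ g x) then ⊤
  else
    (((WithTop.untopD 0 ((P.filter fun z => g x < g z).image g).min -
        (WithBot.unbotD 0 ((P.filter fun z => g z < g x).image g).max)).toNat : ℝ≥0∞)) /
      (((WithBot.unbotD 0 (P.image g).max - (WithTop.untopD 0 (P.image g).min)).toNat : ℝ≥0∞))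

/-- The crowding distance contribution of `x` to `P`. -/
def CDC {n : ℕ} (f : BitString n → ℤ × ℤ) (x : BitString n)
    (P : Finset (BitString n)) : ℝ≥0∞ :=
  CDCobj (fun z => (f z).1) x P + CDCobj (fun z => (f z).2) x P

/-- A diversity measure `c` is diversity-favouring on `S`. -/
def diversityFavouring {n : ℕ} {α : Type*} [Preorder α] (f : BitString n → ℤ × ℤ)
    (c : BitString n → Finset (BitString n) → α) (S : Set (BitString n)) : Prop :=
  ∀ P : Finset (BitString n), mutuallyNonDominated f P →
    ∀ x ∈ P, ∀ y ∈ P, x ∈ S → y ∈ S → isBad f P x → isGood f P y → c x P < c y P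

/-- The default bit string (used only to make selection kernels total). -/
def defaultBS (n : ℕ) : BitString n := fun _ => false

/-- Local mutation: flip a single uniformly random bit. -/
def localMutation {n : ℕ} (hn : 0 < n) (x : BitString n) : PMF (BitString n) :=
  haveI : Nonempty (Fin n) := ⟨⟨0, hn⟩⟩
  (PMF.uniformOfFintype (Fin n)).map (flipBit x)

/-- A Bernoulli coin with success probability `1/n` (for `n ≥ 1`). -/
def bitFlipCoin (n : ℕ) : PMF Bool :=
  PMF.bernoulli (min ((n : ℝ≥0∞))⁻¹ 1).toNNReal
    ((ENNReal.toNNReal_mono ENNReal.one_ne_top (min_le_right _ _)).trans_eq ENNReal.toNNReal_one)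

/-- Global (standard bit) mutation: flip each bit independently with probability `1/n`. -/
def globalMutationAux {n : ℕ} : List (Fin n) → BitString n → PMF (BitString n)
  | [], x => PMF.pure x
  | i :: is, x => (bitFlipCoin n).bind fun b =>
      globalMutationAux is (if b then flipBit x i else x)

def globalMutation {n : ℕ} (x : BitString n) : PMF (BitString n) :=
  globalMutationAux (List.finRange n) x

/-- Survival selection: if `s'` is not dominated by any member of `P`, add `s'` to `P` and
remove all members weakly dominated by `s'`. -/
def updatePop {n : ℕ} (f : BitString n → ℤ × ℤ) (P : Finset (BitString n))
    (s' : BitString n) : Finset (BitString n) :=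
  if ∃ z ∈ P, dominates f z s' then P
  else insert s' (P.filter fun z => ¬ weaklyDominates f s' z)

/-- One iteration of (G)SEMO with parent-selection kernel `select` and mutation `mutate`. -/
def step {n : ℕ} (f : BitString n → ℤ × ℤ)
    (select : Finset (BitString n) → PMF (BitString n))
    (mutate : BitString n → PMF (BitString n))
    (P : Finset (BitString n)) : PMF (Finset (BitString n)) :=
  (select P).bind fun s => (mutate s).map fun s' => updatePop f P s'

/-- The L-dominant attribute `L(x) = LO(x) + TZ(x)`. -/
def Ldom {n : ℕ} (x : BitString n) : ℕ := leadingOnes x + trailingZeros x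

/-- The subpopulation of points with maximum L-dominant attribute. -/
def maxLSub {n : ℕ} (P : Finset (BitString n)) : Finset (BitString n) :=
  P.filter fun x => ∀ z ∈ P, Ldom z ≤ Ldom x

/-- One iteration of the modified GSEMO: parent selection (and the diversity contribution)
is restricted to the subpopulation of points with maximum L-dominant attribute. -/
def stepMod {n : ℕ} (f : BitString n → ℤ × ℤ)
    (select : Finset (BitString n) → PMF (BitString n))
    (mutate : BitString n → PMF (BitString n))
    (P : Finset (BitString n)) : PMF (Finset (BitString n)) :=
  (select (maxLSub P)).bind fun s => (mutate s).map fun s' => updatePop f P s'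

/-- Initial population: a single uniformly random bit string. -/
def initDist (n : ℕ) : PMF (Finset (BitString n)) :=
  (PMF.uniformOfFintype (BitString n)).map fun x => {x}

/-- Distribution of the population after `t` iterations. -/
def stateDist {S : Type*} (init : PMF S) (st : S → PMF S) : ℕ → PMF S
  | 0 => init
  | t + 1 => (stateDist init st t).bind st

/-- Expected number of iterations until an (absorbing) goal predicate is reached,
expressed as `∑ₜ Pr[goal not yet reached at time t]`. -/
def expectedRuntime {S : Type*} (init : PMF S) (st : S → PMF S) (goal : S → Prop) : ℝ≥0∞ :=
  ∑' t : ℕ, (stateDist init st t).toOuterMeasure {s | ¬ goal s}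

/-- Uniform parent selection. -/
def uniformSelect {n : ℕ} (P : Finset (BitString n)) : PMF (BitString n) :=
  if h : P.Nonempty then PMF.uniformOfFinset P h else PMF.pure (defaultBS n)

/-- Highest Diversity Contribution (HDC) parent selection: select an individual with
maximum diversity contribution, ties broken uniformly at random. -/
def HDCSelect {n : ℕ} {α : Type*} [LinearOrder α]
    (c : BitString n → Finset (BitString n) → α)
    (P : Finset (BitString n)) : PMF (BitString n) :=
  if h : P.Nonempty then
    PMF.uniformOfFinset (P.filter fun x => ∀ y ∈ P, c y P ≤ c x P)
      (by
        obtain ⟨b, hb, hmax⟩ := P.exists_max_image (fun x => c x P) h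
        exact ⟨b, Finset.mem_filter.mpr ⟨hb, hmax⟩⟩)
  else PMF.pure (defaultBS n)

/-- Non-Minimum Uniform at Random (NMUAR) parent selection: select uniformly at random
among all individuals whose diversity contribution is not minimal (from the whole
population if all contributions are equal). -/
def NMUARSelect {n : ℕ} {α : Type*} [LinearOrder α]
    (c : BitString n → Finset (BitString n) → α)
    (P : Finset (BitString n)) : PMF (BitString n) :=
  if h : P.Nonempty then
    if hQ : (P.filter fun x => ∃ y ∈ P, c y P < c x P).Nonempty then
      PMF.uniformOfFinset _ hQ
    else PMF.uniformOfFinset P h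
  else PMF.pure (defaultBS n)

/-- Tournament selection with tournament size `μ = |P|`: draw `μ` individuals uniformly at
random with replacement from `P` and select one with the highest diversity contribution
among the drawn multiset (ties broken uniformly at random). -/
def tournamentSelect {n : ℕ} {α : Type*} [LinearOrder α]
    (c : BitString n → Finset (BitString n) → α)
    (P : Finset (BitString n)) : PMF (BitString n) :=
  if h : P.Nonempty then
    haveI : Nonempty {x // x ∈ P} := h.to_subtype
    (PMF.uniformOfFintype (Fin P.card → {x // x ∈ P})).bind fun g =>
      PMF.uniformOfFinset
        ((Finset.univ.image fun i => ((g i : {x // x ∈ P}) : BitString n)).filter fun x =>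
          ∀ y ∈ Finset.univ.image fun i => ((g i : {x // x ∈ P}) : BitString n), c y P ≤ c x P)
        (by
          have hne : (Finset.univ.image fun i => ((g i : {x // x ∈ P}) : BitString n)).Nonempty := by
            refine ⟨(g ⟨0, Finset.card_pos.mpr h⟩ : {x // x ∈ P}), ?_⟩
            exact Finset.mem_image.mpr ⟨⟨0, Finset.card_pos.mpr h⟩, Finset.mem_univ _, rfl⟩
          obtain ⟨b, hb, hmax⟩ :=
            Finset.exists_max_image _ (fun x => c x P) hne
          exact ⟨b, Finset.mem_filter.mpr ⟨hb, hmax⟩⟩)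
  else PMF.pure (defaultBS n)

/-- Exponential ranking scheme: probability of selecting the `i`-th ranked individual
(1-indexed) in a population of size `μ`. -/
def rExp (i μ : ℕ) : ℝ≥0∞ :=
  (2 : ℝ≥0∞)⁻¹ ^ i / ∑ j ∈ Finset.Icc 1 μ, (2 : ℝ≥0∞)⁻¹ ^ j

/-- Power-law ranking scheme. -/
def rPow (i μ : ℕ) : ℝ≥0∞ :=
  ((i : ℝ≥0∞) ^ 2)⁻¹ / ∑ j ∈ Finset.Icc 1 μ, ((j : ℝ≥0∞) ^ 2)⁻¹

/-- Harmonic ranking scheme. -/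
def rHarm (i μ : ℕ) : ℝ≥0∞ :=
  (i : ℝ≥0∞)⁻¹ / ∑ j ∈ Finset.Icc 1 μ, (j : ℝ≥0∞)⁻¹


/-- `select` implements a rank-based parent-selection scheme with rank probabilities
`r i μ` (1-indexed rank `i`, population size `μ`) with respect to the diversity
contribution `c`, for some non-increasing ordering of the population by `c`. -/
def implementsRankScheme {n : ℕ} {α : Type*} [Preorder α]
    (c : BitString n → Finset (BitString n) → α) (r : ℕ → ℕ → ℝ≥0∞)
    (select : Finset (BitString n) → PMF (BitString n)) : Prop :=
  ∀ P : Finset (BitString n), P.Nonempty →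
    ∃ l : List (BitString n), l.Nodup ∧ l.toFinset = P ∧
      l.Chain' (fun a b => c b P ≤ c a P) ∧
      (∀ i : Fin l.length, select P (l.get i) = r (i.val + 1) P.card) ∧
      (∀ x : BitString n, x ∉ P → select P x = 0)

/-- The Pareto-optimal point `1^i 0^(n-i)` of LOTZ. -/
def opt (n i : ℕ) : BitString n := fun t => decide ((t : ℕ) < i)

/-- The whole Pareto set of LOTZ as a population. -/
def frontSet (n : ℕ) : Finset (BitString n) := (Finset.range (n + 1)).image (opt n)

/-- `P` has a gap at position `i`. -/
def hasGapAt {n : ℕ} (P : Finset (BitString n)) (i : ℕ) : Prop :=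
  opt n i ∉ P ∧ (∃ j, j < i ∧ opt n j ∈ P) ∧ (∃ k, i < k ∧ k ≤ n ∧ opt n k ∈ P)

/-- `P` has a gap at some position `i` with `n/4 ≤ i ≤ 3n/4`. -/
def gapInRange (n : ℕ) (P : Finset (BitString n)) : Prop :=
  ∃ i : ℕ, n ≤ 4 * i ∧ 4 * i ≤ 3 * n ∧ hasGapAt P i

/-- `P` contains both `0^n` and `1^n`. -/
def bothExtremes (n : ℕ) (P : Finset (BitString n)) : Prop :=
  allZeros n ∈ P ∧ allOnes n ∈ P

/-- The chain stopped (frozen) as soon as `cond` holds. -/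
def stopWhen {S : Type*} (cond : S → Prop) (st : S → PMF S) (s : S) : PMF S :=
  if cond s then PMF.pure s else st s


variable {n : ℕ} {x : BitString n}

lemma leadingOnes_le (x : BitString n) : leadingOnes x ≤ n := by
  simpa [leadingOnes] using Finset.card_filter_le Finset.univ
    (fun i : Fin n => ∀ j : Fin n, j ≤ i → x j = true)

lemma trailingZeros_le (x : BitString n) : trailingZeros x ≤ n := by
  simpa [trailingZeros] using Finset.card_filter_le Finset.univ
    (fun i : Fin n => ∀ j : Fin n, i ≤ j → x j = false)

lemma lo_lt_iff (x : BitString n) (i : Fin n) :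
    i.val < leadingOnes x ↔ ∀ j, j ≤ i → x j = true := by
  constructor
  · intro h j hj
    by_contra hf
    have hsub : (Finset.univ.filter fun k : Fin n => ∀ m : Fin n, m ≤ k → x m = true)
        ⊆ Finset.Iio j := by
      intro k hk
      rw [Finset.mem_filter] at hk
      rw [Finset.mem_Iio]
      by_contra hlt
      exact hf (hk.2 j (le_of_not_gt hlt))
    have := Finset.card_le_card hsub
    rw [Fin.card_Iio] at this
    unfold leadingOnes at h
    omega
  · intro h
    have hsub : Finset.Iic i ⊆
        (Finset.univ.filter fun k : Fin n => ∀ m : Fin n, m ≤ k → x m = true) := by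
      intro k hk
      rw [Finset.mem_Iic] at hk
      rw [Finset.mem_filter]
      exact ⟨Finset.mem_univ _, fun m hm => h m (le_trans hm hk)⟩
    have := Finset.card_le_card hsub
    rw [Fin.card_Iic] at this
    unfold leadingOnes
    omega

lemma tz_le_iff (x : BitString n) (i : Fin n) :
    n - trailingZeros x ≤ i.val ↔ ∀ j, i ≤ j → x j = false := by
  constructor
  · intro h j hj
    by_contra hf
    have hsub : (Finset.univ.filter fun k : Fin n => ∀ m : Fin n, k ≤ m → x m = false)
        ⊆ Finset.Ioi j := by
      intro k hk
      rw [Finset.mem_filter] at hk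
      rw [Finset.mem_Ioi]
      by_contra hlt
      exact hf (hk.2 j (le_of_not_gt hlt))
    have h2 := Finset.card_le_card hsub
    rw [Fin.card_Ioi] at h2
    unfold trailingZeros at h
    have hj' : j.val < n := j.isLt
    have hij : i.val ≤ j.val := hj
    omega
  · intro h
    have hsub : Finset.Ici i ⊆
        (Finset.univ.filter fun k : Fin n => ∀ m : Fin n, k ≤ m → x m = false) := by
      intro k hk
      rw [Finset.mem_Ici] at hk
      rw [Finset.mem_filter]
      exact ⟨Finset.mem_univ _, fun m hm => h m (le_trans hk hm)⟩
    have := Finset.card_le_card hsub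
    rw [Fin.card_Ici] at this
    unfold trailingZeros
    omega

lemma x_true_of_lt_lo {m : ℕ} (hm : m < n) (h : m < leadingOnes x) : x ⟨m, hm⟩ = true :=
  (lo_lt_iff x ⟨m, hm⟩).1 h _ le_rfl

lemma x_false_at_lo (h : leadingOnes x < n) : x ⟨leadingOnes x, h⟩ = false := by
  by_contra hf
  rw [Bool.not_eq_false] at hf
  have : (⟨leadingOnes x, h⟩ : Fin n).val < leadingOnes x := by
    rw [lo_lt_iff]
    intro j hj
    rcases lt_or_eq_of_le hj with h' | h'
    · have hv : j.val < leadingOnes x := h'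
      have := x_true_of_lt_lo (x := x) j.isLt hv
      simpa using this
    · rw [h']; exact hf
  simp at this

lemma x_false_of_tz {m : ℕ} (hm : m < n) (h : n - trailingZeros x ≤ m) :
    x ⟨m, hm⟩ = false :=
  (tz_le_iff x ⟨m, hm⟩).1 h _ le_rfl

lemma lo_add_tz_le (x : BitString n) : leadingOnes x + trailingZeros x ≤ n := by
  have hd : Disjoint
      (Finset.univ.filter fun i : Fin n => ∀ j : Fin n, j ≤ i → x j = true)
      (Finset.univ.filter fun i : Fin n => ∀ j : Fin n, i ≤ j → x j = false) := by
    rw [Finset.disjoint_left]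
    intro a ha hb
    rw [Finset.mem_filter] at ha hb
    have h1 := ha.2 a le_rfl
    have h2 := hb.2 a le_rfl
    rw [h1] at h2
    exact Bool.noConfusion h2
  have := Finset.card_union_of_disjoint hd
  have hle := Finset.card_le_card (Finset.union_subset (Finset.filter_subset _ _)
    (Finset.filter_subset _ _) :
    ((Finset.univ.filter fun i : Fin n => ∀ j : Fin n, j ≤ i → x j = true) ∪
     (Finset.univ.filter fun i : Fin n => ∀ j : Fin n, i ≤ j → x j = false)) ⊆ Finset.univ)
  rw [this] at hle
  simpa [leadingOnes, trailingZeros] using hle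

lemma exists_flip (h : leadingOnes x + trailingZeros x < n) :
    ∃ i : Fin n, leadingOnes x < leadingOnes (flipBit x i) ∧
      trailingZeros x ≤ trailingZeros (flipBit x i) := by
  have hlo : leadingOnes x < n := by omega
  set i : Fin n := ⟨leadingOnes x, hlo⟩ with hi
  refine ⟨i, ?_, ?_⟩
  · have : i.val < leadingOnes (flipBit x i) := by
      rw [lo_lt_iff]
      intro j hj
      rcases lt_or_eq_of_le hj with h' | h'
      · have hji : j ≠ i := ne_of_lt h'
        rw [flipBit, Function.update_of_ne hji]
        have hv : j.val < leadingOnes x := h'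
        have hje : j = (⟨j.val, j.isLt⟩ : Fin n) := Fin.ext rfl
        rw [hje]
        exact x_true_of_lt_lo j.isLt hv
      · rw [h', flipBit, Function.update_self]
        have := x_false_at_lo hlo
        rw [hi]
        simp only [this]
        rfl
    simpa using this
  · rcases Nat.eq_zero_or_pos (trailingZeros x) with h0 | h0
    · omega
    have hnt : n - trailingZeros x < n := by omega
    set i0 : Fin n := ⟨n - trailingZeros x, hnt⟩ with hi0
    have hx0 : ∀ j, i0 ≤ j → x j = false := (tz_le_iff x i0).1 (le_rfl)
    have hy0 : ∀ j, i0 ≤ j → flipBit x i j = false := by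
      intro j hj
      have hji : j ≠ i := by
        intro hh
        have : i0.val ≤ i.val := by rw [← hh]; exact hj
        simp only [hi0, hi] at this
        omega
      rw [flipBit, Function.update_of_ne hji]
      exact hx0 j hj
    have := (tz_le_iff (flipBit x i) i0).2 hy0
    simp only [hi0] at this
    have h1 := trailingZeros_le x
    have h2 := trailingZeros_le (flipBit x i)
    omega

lemma pareto_iff : paretoOptimal (LOTZ (n := n)) x ↔ leadingOnes x + trailingZeros x = n := by
  constructor
  · intro h
    by_contra hne
    have hlt : leadingOnes x + trailingZeros x < n :=
      lt_of_le_of_ne (lo_add_tz_le x) hne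
    obtain ⟨i, h1, h2⟩ := exists_flip hlt
    refine h ⟨flipBit x i, ?_, ?_, ?_⟩
    · simp only [LOTZ]; exact_mod_cast le_of_lt h1
    · simp only [LOTZ]; exact_mod_cast h2
    · simp only [LOTZ]
      intro hc
      have := congrArg Prod.fst hc
      simp at this
      omega
  · rintro h ⟨y, h1, h2, hne⟩
    simp only [LOTZ] at h1 h2 hne
    have h1' : leadingOnes x ≤ leadingOnes y := by exact_mod_cast h1
    have h2' : trailingZeros x ≤ trailingZeros y := by exact_mod_cast h2
    have h3 := lo_add_tz_le y
    have e1 : leadingOnes x = leadingOnes y := by omega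
    have e2 : trailingZeros x = trailingZeros y := by omega
    exact hne (by rw [e1, e2])

lemma leadingOnes_opt {i : ℕ} (hi : i ≤ n) : leadingOnes (opt n i) = i := by
  have hset : (Finset.univ.filter fun t : Fin n => ∀ j : Fin n, j ≤ t → opt n i j = true)
      = (Finset.range i).attachFin (fun m hm => lt_of_lt_of_le (Finset.mem_range.1 hm) hi) := by
    ext t
    rw [Finset.mem_filter, Finset.mem_attachFin, Finset.mem_range]
    constructor
    · intro ht
      have := ht.2 t le_rfl
      simpa [opt] using this
    · intro ht
      refine ⟨Finset.mem_univ _, fun j hj => ?_⟩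
      simp only [opt, decide_eq_true_eq]
      exact lt_of_le_of_lt (hj : j.val ≤ t.val) ht
  unfold leadingOnes
  rw [hset, Finset.card_attachFin, Finset.card_range]

lemma trailingZeros_opt {i : ℕ} (hi : i ≤ n) : trailingZeros (opt n i) = n - i := by
  have hset : (Finset.univ.filter fun t : Fin n => ∀ j : Fin n, t ≤ j → opt n i j = false)
      = Finset.univ.filter fun t : Fin n => i ≤ t.val := by
    ext t
    rw [Finset.mem_filter, Finset.mem_filter]
    constructor
    · intro ht
      have := ht.2 t le_rfl
      simp only [opt, decide_eq_false_iff_not, not_lt] at this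
      exact ⟨ht.1, this⟩
    · intro ht
      refine ⟨Finset.mem_univ _, fun j hj => ?_⟩
      simp only [opt, decide_eq_false_iff_not, not_lt]
      exact le_trans ht.2 (hj : t.val ≤ j.val)
  unfold trailingZeros
  rw [hset]
  have hcompl := Finset.card_filter_add_card_filter_not
    (s := Finset.univ (α := Fin n)) (p := fun t : Fin n => i ≤ t.val)
  beta_reduce at hcompl
  have hlt : (Finset.univ.filter fun t : Fin n => ¬ i ≤ t.val).card = i := by
    have : (Finset.univ.filter fun t : Fin n => ¬ i ≤ t.val)
        = (Finset.range i).attachFin (fun m hm => lt_of_lt_of_le (Finset.mem_range.1 hm) hi) := by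
      ext t
      rw [Finset.mem_filter, Finset.mem_attachFin, Finset.mem_range]
      simp [not_le]
    rw [this, Finset.card_attachFin, Finset.card_range]
  rw [Finset.card_univ, Fintype.card_fin] at hcompl
  omega

lemma LOTZ_opt {i : ℕ} (hi : i ≤ n) : LOTZ (opt n i) = ((i : ℤ), (n : ℤ) - (i : ℤ)) := by
  simp only [LOTZ, leadingOnes_opt hi, trailingZeros_opt hi]
  congr 1
  push_cast [Nat.cast_sub hi]
  ring

lemma LOTZ_eq_opt_of_ldom (h : Ldom x = n) :
    LOTZ x = LOTZ (opt n (leadingOnes x)) := by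
  unfold Ldom at h
  have hlo : leadingOnes x ≤ n := leadingOnes_le x
  rw [LOTZ_opt hlo]
  simp only [LOTZ, Prod.mk.injEq]
  refine ⟨trivial, ?_⟩
  have h2 := trailingZeros_le x
  push_cast [Nat.cast_sub hlo]
  omega


section UpdatePop
variable {f : BitString n → ℤ × ℤ} {P : Finset (BitString n)} {s' : BitString n}

lemma updatePop_nonempty (h : P.Nonempty) : (updatePop f P s').Nonempty := by
  unfold updatePop
  split_ifs
  · exact h
  · exact Finset.insert_nonempty _ _

lemma mem_updatePop_self (h : ¬ ∃ z ∈ P, dominates f z s') : s' ∈ updatePop f P s' := by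
  unfold updatePop
  rw [if_neg h]
  exact Finset.mem_insert_self _ _

lemma updatePop_subset : updatePop f P s' ⊆ insert s' P := by
  unfold updatePop
  split_ifs
  · exact Finset.subset_insert _ _
  · exact Finset.insert_subset_insert _ (Finset.filter_subset _ _)

lemma updatePop_cover (z : BitString n) (hz : z ∈ P) :
    ∃ w ∈ updatePop f P s', weaklyDominates f w z := by
  unfold updatePop
  split_ifs with h
  · exact ⟨z, hz, le_rfl, le_rfl⟩
  · by_cases hw : weaklyDominates f s' z
    · exact ⟨s', Finset.mem_insert_self _ _, hw⟩
    · exact ⟨z, Finset.mem_insert_of_mem (Finset.mem_filter.2 ⟨hz, hw⟩), le_rfl, le_rfl⟩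

lemma updatePop_mnd (h : mutuallyNonDominated f P) :
    mutuallyNonDominated f (updatePop f P s') := by
  unfold updatePop
  split_ifs with hd
  · exact h
  · intro a ha b hb hdom
    rcases Finset.mem_insert.1 ha with rfl | ha <;>
      rcases Finset.mem_insert.1 hb with rfl | hb
    · exact hdom.2.2 rfl
    · rw [Finset.mem_filter] at hb
      exact hd ⟨b, hb.1, hdom⟩
    · rw [Finset.mem_filter] at ha
      exact ha.2 ⟨hdom.1, hdom.2.1⟩
    · rw [Finset.mem_filter] at ha hb
      exact h a ha.1 b hb.1 hdom

end UpdatePop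

/-- The set of covered Pareto-front indices. -/
def covSet (n : ℕ) (P : Finset (BitString n)) : Finset ℕ :=
  (Finset.range (n+1)).filter fun i => ∃ z ∈ P, LOTZ z = LOTZ (opt n i)

/-- rank/potential of a population. -/
def rankP (n : ℕ) (P : Finset (BitString n)) : ℕ :=
  if ∃ z ∈ P, Ldom z = n then n + (covSet n P).card else P.sup Ldom

variable {P : Finset (BitString n)} {s' : BitString n}

lemma covSet_card_le : (covSet n P).card ≤ n + 1 :=
  le_trans (Finset.card_filter_le _ _) (le_of_eq (Finset.card_range _))

lemma weak_dom_of_front {z w : BitString n} (hz : Ldom z = n)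
    (hw : weaklyDominates LOTZ w z) : LOTZ w = LOTZ z ∧ Ldom w = n := by
  obtain ⟨h1, h2⟩ := hw
  simp only [LOTZ] at h1 h2
  have h1' : leadingOnes z ≤ leadingOnes w := by exact_mod_cast h1
  have h2' : trailingZeros z ≤ trailingZeros w := by exact_mod_cast h2
  have h3 := lo_add_tz_le w
  unfold Ldom at hz ⊢
  have e1 : leadingOnes w = leadingOnes z := by omega
  have e2 : trailingZeros w = trailingZeros z := by omega
  exact ⟨by simp [LOTZ, e1, e2], by omega⟩

lemma mem_covSet_of_front {z : BitString n} (hz : Ldom z = n) (hzP : z ∈ P) :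
    leadingOnes z ∈ covSet n P := by
  unfold covSet
  rw [Finset.mem_filter, Finset.mem_range]
  exact ⟨by have := leadingOnes_le z; omega, z, hzP, LOTZ_eq_opt_of_ldom hz⟩

lemma ldom_of_mem_covSet {i : ℕ} (hi : i ∈ covSet n P) :
    ∃ z ∈ P, LOTZ z = LOTZ (opt n i) ∧ Ldom z = n := by
  unfold covSet at hi
  rw [Finset.mem_filter, Finset.mem_range] at hi
  obtain ⟨hin, z, hz, hLz⟩ := hi
  refine ⟨z, hz, hLz, ?_⟩
  have hin' : i ≤ n := by omega
  rw [LOTZ_opt hin'] at hLz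
  simp only [LOTZ, Prod.mk.injEq] at hLz
  have e1 : leadingOnes z = i := by exact_mod_cast hLz.1
  have e2 : (trailingZeros z : ℤ) = (n : ℤ) - (i : ℤ) := hLz.2
  have e2' : trailingZeros z = n - i := by omega
  unfold Ldom
  omega

lemma covSet_subset_update : covSet n P ⊆ covSet n (updatePop LOTZ P s') := by
  intro i hi
  obtain ⟨z, hz, hLz, hnz⟩ := ldom_of_mem_covSet hi
  obtain ⟨w, hw, hweak⟩ := updatePop_cover (f := LOTZ) (s' := s') z hz
  obtain ⟨he, _⟩ := weak_dom_of_front hnz hweak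
  unfold covSet at hi ⊢
  rw [Finset.mem_filter] at hi ⊢
  exact ⟨hi.1, w, hw, he.trans hLz⟩

lemma front_persists (hz : ∃ z ∈ P, Ldom z = n) :
    ∃ w ∈ updatePop LOTZ P s', Ldom w = n := by
  obtain ⟨z, hzP, hzn⟩ := hz
  obtain ⟨w, hw, hweak⟩ := updatePop_cover (f := LOTZ) (s' := s') z hzP
  exact ⟨w, hw, (weak_dom_of_front hzn hweak).2⟩

lemma sup_ldom_le : P.sup Ldom ≤ n :=
  Finset.sup_le fun z _ => by have := lo_add_tz_le z; unfold Ldom; omega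

lemma rankP_le : rankP n P ≤ 2 * n + 1 := by
  unfold rankP
  split_ifs
  · have := covSet_card_le (P := P)
    omega
  · have := sup_ldom_le (P := P)
    omega

lemma rankP_mono : rankP n P ≤ rankP n (updatePop LOTZ P s') := by
  unfold rankP
  by_cases hz : ∃ z ∈ P, Ldom z = n
  · rw [if_pos hz, if_pos (front_persists hz)]
    have := Finset.card_le_card (covSet_subset_update (P := P) (s' := s'))
    omega
  · rw [if_neg hz]
    split_ifs with hz'
    · have h1 : 1 ≤ (covSet n (updatePop LOTZ P s')).card := by
        obtain ⟨w, hw, hwn⟩ := hz'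
        exact Finset.card_pos.2 ⟨leadingOnes w, mem_covSet_of_front hwn hw⟩
      have := sup_ldom_le (P := P)
      omega
    · refine Finset.sup_le fun z hzP => ?_
      obtain ⟨w, hw, hweak⟩ := updatePop_cover (f := LOTZ) (s' := s') z hzP
      refine le_trans ?_ (Finset.le_sup hw)
      obtain ⟨h1, h2⟩ := hweak
      simp only [LOTZ] at h1 h2
      have h1' : leadingOnes z ≤ leadingOnes w := by exact_mod_cast h1
      have h2' : trailingZeros z ≤ trailingZeros w := by exact_mod_cast h2
      unfold Ldom
      omega

lemma rankP_up_A (hnp : ¬ ∃ z ∈ P, Ldom z = n) {x : BitString n} (hxP : x ∈ P)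
    (hx : ∀ z ∈ P, Ldom z ≤ Ldom x) :
    ∃ i : Fin n, rankP n P < rankP n (updatePop LOTZ P (flipBit x i)) := by
  have hxn : Ldom x < n := by
    have h1 := lo_add_tz_le x
    have h2 : Ldom x ≠ n := fun h => hnp ⟨x, hxP, h⟩
    unfold Ldom at h2 ⊢
    omega
  obtain ⟨i, h1, h2⟩ := exists_flip (x := x) hxn
  refine ⟨i, ?_⟩
  set s' := flipBit x i with hs'
  have hds : Ldom x < Ldom s' := by unfold Ldom; omega
  have hnotdom : ¬ ∃ z ∈ P, dominates LOTZ z s' := by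
    rintro ⟨z, hzP, hd1, hd2, _⟩
    simp only [LOTZ] at hd1 hd2
    have hd1' : leadingOnes s' ≤ leadingOnes z := by exact_mod_cast hd1
    have hd2' : trailingZeros s' ≤ trailingZeros z := by exact_mod_cast hd2
    have := hx z hzP
    unfold Ldom at this hds
    omega
  have hmem : s' ∈ updatePop LOTZ P s' := mem_updatePop_self hnotdom
  have hrP : rankP n P = Ldom x := by
    unfold rankP
    rw [if_neg hnp]
    exact le_antisymm (Finset.sup_le hx) (Finset.le_sup hxP)
  rw [hrP]
  unfold rankP
  split_ifs with hz'
  · have h1 : 1 ≤ (covSet n (updatePop LOTZ P s')).card := by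
      obtain ⟨w, hw, hwn⟩ := hz'
      exact Finset.card_pos.2 ⟨leadingOnes w, mem_covSet_of_front hwn hw⟩
    omega
  · exact lt_of_lt_of_le hds (Finset.le_sup hmem)

lemma rankP_up_B (hp : ∃ z ∈ P, Ldom z = n) {x : BitString n}
    (hx : isGood LOTZ P x) :
    ∃ i : Fin n, rankP n P < rankP n (updatePop LOTZ P (flipBit x i)) := by
  obtain ⟨-, y, ⟨i, rfl⟩, hyp, hfresh⟩ := hx
  refine ⟨i, ?_⟩
  set s' := flipBit x i with hs'
  have hyn : Ldom s' = n := pareto_iff.1 hyp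
  have hnotdom : ¬ ∃ z ∈ P, dominates LOTZ z s' := fun ⟨z, _, hd⟩ => hyp ⟨z, hd⟩
  have hmem : s' ∈ updatePop LOTZ P s' := mem_updatePop_self hnotdom
  unfold rankP
  rw [if_pos hp, if_pos ⟨s', hmem, hyn⟩]
  have hssub : covSet n P ⊂ covSet n (updatePop LOTZ P s') := by
    refine ⟨covSet_subset_update, fun hsub => ?_⟩
    have hmemc : leadingOnes s' ∈ covSet n (updatePop LOTZ P s') :=
      mem_covSet_of_front hyn hmem
    obtain ⟨z, hzP, hLz, _⟩ := ldom_of_mem_covSet (hsub hmemc)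
    exact hfresh z hzP (hLz.trans (LOTZ_eq_opt_of_ldom hyn).symm)
  have := Finset.card_lt_card hssub
  omega


lemma rankP_top_covers (h : rankP n P = 2 * n + 1) : coversFront LOTZ P := by
  unfold rankP at h
  split_ifs at h with hz
  · have hcard : n + 1 ≤ (covSet n P).card := by omega
    have heq : covSet n P = Finset.range (n + 1) :=
      Finset.eq_of_subset_of_card_le (Finset.filter_subset _ _)
        (by rw [Finset.card_range]; exact hcard)
    intro x hx
    have hldx : Ldom x = n := pareto_iff.1 hx
    have hlo : leadingOnes x ≤ n := leadingOnes_le x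
    have hmem : leadingOnes x ∈ covSet n P := by
      rw [heq, Finset.mem_range]; omega
    obtain ⟨z, hzP, hLz, _⟩ := ldom_of_mem_covSet hmem
    exact ⟨z, hzP, hLz.trans (LOTZ_eq_opt_of_ldom hldx).symm⟩
  · have := sup_ldom_le (P := P)
    omega

section Mutation

lemma coin_false : bitFlipCoin n false = 1 - min ((n : ℝ≥0∞))⁻¹ 1 := by
  rw [bitFlipCoin, PMF.bernoulli_apply, cond_false, ENNReal.coe_sub, ENNReal.coe_one,
    ENNReal.coe_toNNReal (ne_top_of_le_ne_top ENNReal.one_ne_top (min_le_right _ _))]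
lemma coin_true : bitFlipCoin n true = min ((n : ℝ≥0∞))⁻¹ 1 := by
  rw [bitFlipCoin, PMF.bernoulli_apply, cond_true,
    ENNReal.coe_toNNReal (ne_top_of_le_ne_top ENNReal.one_ne_top (min_le_right _ _))]

lemma aux_self (l : List (Fin n)) (x : BitString n) :
    (1 - min ((n : ℝ≥0∞))⁻¹ 1) ^ l.length ≤ globalMutationAux l x x := by
  induction l generalizing x with
  | nil => simp [globalMutationAux, PMF.pure_apply]
  | cons i is ih =>
    have hb : (globalMutationAux (i :: is) x) x
        = ∑' b : Bool, bitFlipCoin n b * (globalMutationAux is (if b then flipBit x i else x)) x := by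
      simp [globalMutationAux, PMF.bind_apply]
    rw [hb]
    refine le_trans ?_ (ENNReal.le_tsum false)
    simp only [if_neg Bool.false_ne_true, List.length_cons, pow_succ, coin_false,
      Bool.false_eq_true, if_false]
    rw [mul_comm]
    exact mul_le_mul_right (ih x) _

lemma aux_flip (l : List (Fin n)) (x : BitString n) (i : Fin n) (hi : i ∈ l) :
    min ((n : ℝ≥0∞))⁻¹ 1 * (1 - min ((n : ℝ≥0∞))⁻¹ 1) ^ (l.length - 1)
      ≤ globalMutationAux l x (flipBit x i) := by
  induction l generalizing x with
  | nil => simp at hi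
  | cons j is ih =>
    have hb : (globalMutationAux (j :: is) x) (flipBit x i)
        = ∑' b : Bool, bitFlipCoin n b *
            (globalMutationAux is (if b then flipBit x j else x)) (flipBit x i) := by
      simp [globalMutationAux, PMF.bind_apply]
    rw [hb]
    rcases List.mem_cons.1 hi with rfl | hi'
    · refine le_trans ?_ (ENNReal.le_tsum true)
      simp only [if_pos rfl, coin_true, List.length_cons, Nat.add_sub_cancel]
      exact mul_le_mul_right (aux_self is (flipBit x i)) _
    · refine le_trans ?_ (ENNReal.le_tsum false)
      simp only [Bool.false_eq_true, if_false, coin_false]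
      have hlen : 0 < is.length := List.length_pos_iff.2 (List.ne_nil_of_mem hi')
      have : min ((n : ℝ≥0∞))⁻¹ 1 * (1 - min ((n : ℝ≥0∞))⁻¹ 1) ^ ((j :: is).length - 1)
          = (1 - min ((n : ℝ≥0∞))⁻¹ 1) *
            (min ((n : ℝ≥0∞))⁻¹ 1 * (1 - min ((n : ℝ≥0∞))⁻¹ 1) ^ (is.length - 1)) := by
        have h2 : (j :: is).length - 1 = (is.length - 1) + 1 := by
          rw [List.length_cons]
          omega
        rw [h2, pow_succ]
        ring
      rw [this]
      exact mul_le_mul_right (ih x hi') _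

lemma globalMutation_flip (hn : 0 < n) (x : BitString n) (i : Fin n) :
    (n : ℝ≥0∞)⁻¹ * (1 - (n : ℝ≥0∞)⁻¹) ^ (n - 1) ≤ globalMutation x (flipBit x i) := by
  have hmin : min ((n : ℝ≥0∞))⁻¹ 1 = (n : ℝ≥0∞)⁻¹ := by
    apply min_eq_left
    rw [ENNReal.inv_le_one]
    exact_mod_cast Nat.one_le_cast.2 hn
  have := aux_flip (List.finRange n) x i (List.mem_finRange i)
  rw [hmin, List.length_finRange] at this
  exact this

lemma real_pow_bound (hn : 0 < n) : (4 : ℝ)⁻¹ ≤ (1 - (n : ℝ)⁻¹) ^ (n - 1) := by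
  rcases Nat.eq_or_lt_of_le hn with h1 | h2
  · rw [← h1]
    norm_num
  · -- n ≥ 2
    have hn2 : (2 : ℕ) ≤ n := h2
    have hnR : (2 : ℝ) ≤ (n : ℝ) := by exact_mod_cast hn2
    have hr_pos : (0 : ℝ) < 1 - (n : ℝ)⁻¹ := by
      have : (n : ℝ)⁻¹ < 1 := by
        rw [inv_lt_one_iff₀]
        right
        linarith
      linarith
    have hlog : -(1 : ℝ) ≤ ((n : ℝ) - 1) * Real.log (1 - (n : ℝ)⁻¹) := by
      have h1n : (1 : ℝ) - (n : ℝ)⁻¹ = ((n : ℝ) - 1) / n := by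
        field_simp
      have hinv : (1 - (n : ℝ)⁻¹)⁻¹ = (n : ℝ) / ((n : ℝ) - 1) := by
        rw [h1n, inv_div]
      have hlg : Real.log (1 - (n : ℝ)⁻¹) = - Real.log ((n : ℝ) / ((n : ℝ) - 1)) := by
        rw [← Real.log_inv, ← hinv, inv_inv]
      have hle : Real.log ((n : ℝ) / ((n : ℝ) - 1)) ≤ (n : ℝ) / ((n : ℝ) - 1) - 1 := by
        apply Real.log_le_sub_one_of_pos
        apply div_pos (by linarith) (by linarith)
      have hd : (n : ℝ) / ((n : ℝ) - 1) - 1 = 1 / ((n : ℝ) - 1) := by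
        have hne : (n : ℝ) - 1 ≠ 0 := by linarith
        field_simp
        ring
      rw [hlg]
      have hpos : (0 : ℝ) < (n : ℝ) - 1 := by linarith
      calc (-1 : ℝ) = ((n : ℝ) - 1) * (-(1 / ((n : ℝ) - 1))) := by field_simp
        _ ≤ ((n : ℝ) - 1) * (-Real.log ((n : ℝ) / ((n : ℝ) - 1))) := by
            apply mul_le_mul_of_nonneg_left _ (le_of_lt hpos)
            rw [hd] at hle
            linarith
    have hexp : (1 - (n : ℝ)⁻¹) ^ (n - 1) = Real.exp ((↑(n - 1) : ℝ) * Real.log (1 - (n : ℝ)⁻¹)) := by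
      rw [Real.exp_nat_mul, Real.exp_log hr_pos]
    have hcast : ((n - 1 : ℕ) : ℝ) = (n : ℝ) - 1 := by
      rw [Nat.cast_sub hn]
      norm_num
    rw [hexp, hcast]
    calc (4 : ℝ)⁻¹ ≤ Real.exp (-1) := by
          rw [Real.exp_neg]
          apply inv_anti₀ (by positivity)
          calc Real.exp 1 ≤ 2.7182818286 := le_of_lt Real.exp_one_lt_d9
            _ ≤ 4 := by norm_num
      _ ≤ Real.exp (((n : ℝ) - 1) * Real.log (1 - (n : ℝ)⁻¹)) := Real.exp_le_exp.2 hlog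

lemma pow_bound (hn : 0 < n) : (4 : ℝ≥0∞)⁻¹ ≤ (1 - (n : ℝ≥0∞)⁻¹) ^ (n - 1) := by
  have hnn : (0 : ℝ) < (n : ℝ) := by exact_mod_cast hn
  have h1 : (1 : ℝ≥0∞) - (n : ℝ≥0∞)⁻¹ = ENNReal.ofReal (1 - (n : ℝ)⁻¹) := by
    rw [ENNReal.ofReal_sub _ (by positivity : (0:ℝ) ≤ (n:ℝ)⁻¹), ENNReal.ofReal_one,
      ENNReal.ofReal_inv_of_pos hnn, ENNReal.ofReal_natCast]
  have h4 : (4 : ℝ≥0∞)⁻¹ = ENNReal.ofReal ((4 : ℝ)⁻¹) := by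
    rw [ENNReal.ofReal_inv_of_pos (by norm_num)]
    norm_num
  have h1n : (1 : ℝ) ≤ (n : ℝ) := by exact_mod_cast hn
  have hinv1 : (n : ℝ)⁻¹ ≤ 1 := by
    rw [inv_le_one_iff₀]
    right
    exact h1n
  rw [h1, h4, ← ENNReal.ofReal_pow (by linarith)]
  exact ENNReal.ofReal_le_ofReal (real_pow_bound hn)

lemma globalMutation_flip4 (hn : 0 < n) (x : BitString n) (i : Fin n) :
    (n : ℝ≥0∞)⁻¹ * 4⁻¹ ≤ globalMutation x (flipBit x i) := by
  refine le_trans ?_ (globalMutation_flip hn x i)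
  exact mul_le_mul_right (pow_bound hn) _

end Mutation


section Assembly
variable {P : Finset (BitString n)}

lemma maxLSub_nonempty (h : P.Nonempty) : (maxLSub P).Nonempty := by
  obtain ⟨b, hb, hmax⟩ := P.exists_max_image Ldom h
  exact ⟨b, Finset.mem_filter.2 ⟨hb, hmax⟩⟩

lemma step_up (hn : 0 < n) {p : ℝ≥0∞} (hp1 : p ≤ 1)
    (select : Finset (BitString n) → PMF (BitString n))
    (hsupp : ∀ P : Finset (BitString n), P.Nonempty → ∀ x ∈ (select P).support, x ∈ P)
    (hpgood : ∀ P : Finset (BitString n), P.Nonempty → mutuallyNonDominated LOTZ P →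
      (∃ x ∈ P, paretoOptimal LOTZ x) → ¬ coversFront LOTZ P →
      p ≤ (select (maxLSub P)).toOuterMeasure {x | isGood LOTZ P x})
    (hne : P.Nonempty) (hmnd : mutuallyNonDominated LOTZ P)
    (hng : ¬ coversFront LOTZ P) :
    (n : ℝ≥0∞)⁻¹ * 4⁻¹ * p ≤ (stepMod LOTZ select globalMutation P).toOuterMeasure
      {Q | rankP n P < rankP n Q} := by
  set G : Set (Finset (BitString n)) := {Q | rankP n P < rankP n Q} with hG
  have hdec : (stepMod LOTZ select globalMutation P).toOuterMeasure G
      = ∑' a, (select (maxLSub P)) a *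
          (globalMutation a).toOuterMeasure ((fun s' => updatePop LOTZ P s') ⁻¹' G) := by
    rw [stepMod, PMF.toOuterMeasure_bind_apply]
    refine tsum_congr fun a => ?_
    rw [PMF.toOuterMeasure_map_apply]
  rw [hdec]
  have hq : ∀ (a : BitString n) (i : Fin n),
      rankP n P < rankP n (updatePop LOTZ P (flipBit a i)) →
      (n : ℝ≥0∞)⁻¹ * 4⁻¹ ≤
        (globalMutation a).toOuterMeasure ((fun s' => updatePop LOTZ P s') ⁻¹' G) := by
    intro a i hup
    refine le_trans (globalMutation_flip4 hn a i) ?_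
    refine le_trans (le_of_eq ((globalMutation a).toOuterMeasure_apply_singleton
      (flipBit a i)).symm) ?_
    refine (globalMutation a).toOuterMeasure.mono ?_
    intro y hy
    rw [Set.mem_singleton_iff] at hy
    rw [hy]
    exact hup
  by_cases hz : ∃ z ∈ P, Ldom z = n
  · -- Pareto front reached: use good-selection hypothesis
    have hp : p ≤ (select (maxLSub P)).toOuterMeasure {x | isGood LOTZ P x} := by
      refine hpgood P hne hmnd ?_ hng
      obtain ⟨z, hzP, hzn⟩ := hz
      exact ⟨z, hzP, pareto_iff.2 hzn⟩
    calc (n : ℝ≥0∞)⁻¹ * 4⁻¹ * p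
        ≤ (n : ℝ≥0∞)⁻¹ * 4⁻¹ * (select (maxLSub P)).toOuterMeasure {x | isGood LOTZ P x} :=
          mul_le_mul_right hp _
      _ = ∑' a, (n : ℝ≥0∞)⁻¹ * 4⁻¹ *
            Set.indicator {x | isGood LOTZ P x} (select (maxLSub P)) a := by
          rw [PMF.toOuterMeasure_apply, ENNReal.tsum_mul_left]
      _ ≤ ∑' a, (select (maxLSub P)) a *
            (globalMutation a).toOuterMeasure ((fun s' => updatePop LOTZ P s') ⁻¹' G) := by
          refine ENNReal.tsum_le_tsum fun a => ?_
          by_cases ha : a ∈ {x | isGood LOTZ P x}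
          · rw [Set.indicator_of_mem ha]
            obtain ⟨i, hi⟩ := rankP_up_B hz ha
            rw [mul_comm]
            exact mul_le_mul_right (hq a i hi) _
          · rw [Set.indicator_of_notMem ha, mul_zero]
            exact zero_le
  · -- before the front: any selected parent works
    have hsup : ∀ a ∈ (select (maxLSub P)).support,
        (n : ℝ≥0∞)⁻¹ * 4⁻¹ ≤
          (globalMutation a).toOuterMeasure ((fun s' => updatePop LOTZ P s') ⁻¹' G) := by
      intro a ha
      have haM := hsupp (maxLSub P) (maxLSub_nonempty hne) a ha
      rw [maxLSub, Finset.mem_filter] at haM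
      obtain ⟨i, hi⟩ := rankP_up_A hz haM.1 haM.2
      exact hq a i hi
    calc (n : ℝ≥0∞)⁻¹ * 4⁻¹ * p
        ≤ (n : ℝ≥0∞)⁻¹ * 4⁻¹ * 1 := mul_le_mul_right hp1 _
      _ = (∑' a, (select (maxLSub P)) a) * ((n : ℝ≥0∞)⁻¹ * 4⁻¹) := by
          rw [(select (maxLSub P)).tsum_coe, one_mul, mul_one]
      _ = ∑' a, (select (maxLSub P)) a * ((n : ℝ≥0∞)⁻¹ * 4⁻¹) := by
          rw [ENNReal.tsum_mul_right]
      _ ≤ ∑' a, (select (maxLSub P)) a *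
            (globalMutation a).toOuterMeasure ((fun s' => updatePop LOTZ P s') ⁻¹' G) := by
          refine ENNReal.tsum_le_tsum fun a => ?_
          by_cases ha : a ∈ (select (maxLSub P)).support
          · exact mul_le_mul_right (hsup a ha) _
          · rw [PMF.apply_eq_zero_iff _ _ |>.2 ha, zero_mul, zero_mul]

end Assembly

theorem level_lemma {S : Type*} (init : PMF S) (st : S → PMF S) (goal : S → Prop)
    (inv : S → Prop) (rank : S → ℕ) (M : ℕ) (s : ℝ≥0∞)
    (h_inv0 : ∀ x ∈ init.support, inv x)
    (h_inv : ∀ x, inv x → ∀ y ∈ (st x).support, inv y)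
    (h_rank_le : ∀ x, inv x → rank x ≤ M)
    (h_goal : ∀ x, inv x → rank x = M → goal x)
    (h_mono : ∀ x, inv x → ∀ y ∈ (st x).support, rank x ≤ rank y)
    (h_up : ∀ x, inv x → ¬ goal x → s ≤ (st x).toOuterMeasure {y | rank x < rank y}) :
    expectedRuntime init st goal ≤ M * s⁻¹ := by
  set μ : ℕ → PMF S := stateDist init st with hμ
  -- invariant a.s.
  have hinv_t : ∀ t, ∀ x ∈ (μ t).support, inv x := by
    intro t
    induction t with
    | zero => exact h_inv0
    | succ t ih =>
      intro x hx
      rw [hμ] at hx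
      simp only [stateDist, PMF.mem_support_iff, PMF.bind_apply] at hx
      have hex : ∃ a, (stateDist init st t) a * (st a) x ≠ 0 := by
        by_contra h
        push_neg at h
        exact hx (ENNReal.tsum_eq_zero.mpr h)
      obtain ⟨a, ha⟩ := hex
      rw [mul_ne_zero_iff] at ha
      exact h_inv a (ih a (((μ t).mem_support_iff _).2 ha.1)) x (((st a).mem_support_iff _).2 ha.2)
  set A : ℕ → Set S := fun k => {x | inv x ∧ k < rank x} with hA
  set B : ℕ → Set S := fun k => {x | inv x ∧ rank x = k ∧ ¬ goal x} with hB
  -- key one-step inequality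
  have key : ∀ k t, (μ t).toOuterMeasure (A k) + s * (μ t).toOuterMeasure (B k)
      ≤ (μ (t+1)).toOuterMeasure (A k) := by
    intro k t
    have h1 : (μ (t+1)).toOuterMeasure (A k) = ∑' a, (μ t) a * (st a).toOuterMeasure (A k) := by
      rw [hμ]; exact PMF.toOuterMeasure_bind_apply _ _ _
    rw [h1, PMF.toOuterMeasure_apply, PMF.toOuterMeasure_apply, ← ENNReal.tsum_mul_left,
      ← ENNReal.tsum_add]
    refine ENNReal.tsum_le_tsum fun a => ?_
    by_cases hsup : a ∈ (μ t).support
    · have hia := hinv_t t a hsup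
      by_cases haA : a ∈ A k
      · obtain ⟨hai, hak⟩ := haA
        have h1 : (st a).toOuterMeasure (A k) = 1 := by
          rw [PMF.toOuterMeasure_apply_eq_one_iff]
          intro y hy
          exact ⟨h_inv a hai y hy, lt_of_lt_of_le hak (h_mono a hai y hy)⟩
        have hB0 : (B k).indicator (μ t) a = 0 := by
          apply Set.indicator_of_notMem
          rintro ⟨_, hb, _⟩
          omega
        rw [hB0, mul_zero, add_zero, h1, mul_one]
        exact Set.indicator_apply_le fun _ => le_rfl
      · by_cases haB : a ∈ B k
        · have hst : s ≤ (st a).toOuterMeasure (A k) := by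
            refine le_trans (h_up a haB.1 haB.2.2) (PMF.toOuterMeasure_mono _ ?_)
            rintro y ⟨hy1, hy2⟩
            exact ⟨h_inv a haB.1 y hy2, haB.2.1 ▸ hy1⟩
          have hA0 : (A k).indicator (μ t) a = 0 := Set.indicator_of_notMem haA _
          rw [hA0, zero_add, Set.indicator_of_mem haB]
          calc s * μ t a ≤ (st a).toOuterMeasure (A k) * μ t a := by
                exact mul_le_mul_left hst _
            _ = μ t a * (st a).toOuterMeasure (A k) := mul_comm _ _
        · rw [Set.indicator_of_notMem haA, Set.indicator_of_notMem haB]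
          simp
    · have h0 : (μ t) a = 0 := PMF.apply_eq_zero_iff _ _ |>.2 hsup
      simp [h0, Set.indicator_apply]
  have le1 : ∀ (q : PMF S) (E : Set S), q.toOuterMeasure E ≤ 1 := by
    intro q E
    refine le_trans (q.toOuterMeasure.mono (Set.subset_univ E)) (le_of_eq ?_)
    exact (q.toOuterMeasure_apply_eq_one_iff _).2 (Set.subset_univ _)
  have cum : ∀ k T, s * ∑ t ∈ Finset.range T, (μ t).toOuterMeasure (B k)
      ≤ (μ T).toOuterMeasure (A k) := by
    intro k T
    induction T with
    | zero => simp
    | succ T ih =>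
      rw [Finset.sum_range_succ, mul_add]
      calc s * ∑ t ∈ Finset.range T, (μ t).toOuterMeasure (B k)
            + s * (μ T).toOuterMeasure (B k)
          ≤ (μ T).toOuterMeasure (A k) + s * (μ T).toOuterMeasure (B k) := by
            exact add_le_add ih le_rfl
        _ ≤ (μ (T+1)).toOuterMeasure (A k) := key k T
  have tsumB : ∀ k, ∑' t, (μ t).toOuterMeasure (B k) ≤ s⁻¹ := by
    intro k
    refine Summable.tsum_le_of_sum_range_le ENNReal.summable fun T => ?_
    rw [ENNReal.le_inv_iff_mul_le]
    calc (∑ t ∈ Finset.range T, (μ t).toOuterMeasure (B k)) * s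
        = s * ∑ t ∈ Finset.range T, (μ t).toOuterMeasure (B k) := mul_comm _ _
      _ ≤ (μ T).toOuterMeasure (A k) := cum k T
      _ ≤ 1 := le1 _ _
  have hpt : ∀ t, (μ t).toOuterMeasure {x | ¬ goal x}
      ≤ ∑ k ∈ Finset.range M, (μ t).toOuterMeasure (B k) := by
    intro t
    refine le_trans (le_trans ((μ t).toOuterMeasure_mono
      (t := ⋃ k ∈ Finset.range M, B k) ?_) ?_) le_rfl
    · rintro x ⟨hxg, hxs⟩
      have hix := hinv_t t x hxs
      have hlt : rank x < M := by
        rcases lt_or_eq_of_le (h_rank_le x hix) with h | h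
        · exact h
        · exact absurd (h_goal x hix h) hxg
      exact Set.mem_biUnion (Finset.mem_range.2 hlt) ⟨hix, rfl, hxg⟩
    · exact MeasureTheory.measure_biUnion_finset_le _ _
  calc expectedRuntime init st goal
      ≤ ∑' t, ∑ k ∈ Finset.range M, (μ t).toOuterMeasure (B k) :=
        ENNReal.tsum_le_tsum hpt
    _ = ∑ k ∈ Finset.range M, ∑' t, (μ t).toOuterMeasure (B k) :=
        Summable.tsum_finsetSum fun _ _ => ENNReal.summable
    _ ≤ ∑ k ∈ Finset.range M, s⁻¹ := Finset.sum_le_sum fun k _ => tsumB k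
    _ = M * s⁻¹ := by rw [Finset.sum_const, Finset.card_range, nsmul_eq_mul]


/-- The modified GSEMO on LOTZ: if in every iteration after the Pareto
front is reached in which the front is not yet fully covered a good individual is
selected with probability at least `p`, then the expected number of iterations until
the population covers the whole Pareto front is at most `O(n²/p)`. -/
theorem modified_gsemo_lotz_pgood :
    ∃ C : ℝ, 0 < C ∧ ∀ n : ℕ, 0 < n → ∀ p : ℝ≥0∞, 0 < p → p ≤ 1 →
      ∀ select : Finset (BitString n) → PMF (BitString n),
        (∀ P : Finset (BitString n), P.Nonempty →
          ∀ x ∈ (select P).support, x ∈ P) →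
        (∀ P : Finset (BitString n), P.Nonempty → mutuallyNonDominated LOTZ P →
          (∃ x ∈ P, paretoOptimal LOTZ x) → ¬ coversFront LOTZ P →
          p ≤ (select (maxLSub P)).toOuterMeasure {x | isGood LOTZ P x}) →
        expectedRuntime (initDist n) (stepMod LOTZ select globalMutation)
            (coversFront LOTZ) ≤
          ENNReal.ofReal (C * (n : ℝ) ^ 2) / p := by
  refine ⟨12, by norm_num, ?_⟩
  intro n hn p hp0 hp1 select hsupp hpgood
  set s : ℝ≥0∞ := (n : ℝ≥0∞)⁻¹ * 4⁻¹ * p with hs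
  have hmain : expectedRuntime (initDist n) (stepMod LOTZ select globalMutation)
      (coversFront LOTZ) ≤ (2 * n + 1 : ℕ) * s⁻¹ := by
    refine level_lemma (initDist n) (stepMod LOTZ select globalMutation) (coversFront LOTZ)
      (fun P => P.Nonempty ∧ mutuallyNonDominated LOTZ P) (rankP n) (2 * n + 1) s
      ?_ ?_ ?_ ?_ ?_ ?_
    · -- initial invariant
      intro Q hQ
      rw [initDist, PMF.support_map] at hQ
      obtain ⟨x, -, rfl⟩ := hQ
      refine ⟨Finset.singleton_nonempty _, ?_⟩
      intro a ha b hb hd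
      rw [Finset.mem_singleton] at ha hb
      rw [ha, hb] at hd
      exact hd.2.2 rfl
    · -- invariant preserved
      intro P hP Q hQ
      simp only [stepMod, PMF.support_bind, Set.mem_iUnion, PMF.support_map,
        Set.mem_image] at hQ
      obtain ⟨a, -, s', -, rfl⟩ := hQ
      exact ⟨updatePop_nonempty hP.1, updatePop_mnd hP.2⟩
    · exact fun P _ => rankP_le
    · exact fun P hP hr => rankP_top_covers hr
    · -- rank monotone
      intro P hP Q hQ
      simp only [stepMod, PMF.support_bind, Set.mem_iUnion, PMF.support_map,
        Set.mem_image] at hQ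
      obtain ⟨a, -, s', -, rfl⟩ := hQ
      exact rankP_mono
    · -- improvement probability
      intro P hP hng
      exact step_up hn hp1 select hsupp hpgood hP.1 hP.2 hng
  refine le_trans hmain ?_
  have hps : s⁻¹ = (n : ℝ≥0∞) * 4 * p⁻¹ := by
    rw [hs]
    have hn0 : ((n : ℝ≥0∞))⁻¹ * 4⁻¹ ≠ 0 := by
      apply mul_ne_zero <;> simp [ENNReal.inv_ne_zero]
    have hntop : ((n : ℝ≥0∞))⁻¹ * 4⁻¹ ≠ ⊤ := by
      apply ENNReal.mul_ne_top
      · exact ENNReal.inv_ne_top.2 ((Nat.cast_ne_zero (R := ℝ≥0∞)).2 hn.ne')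
      · simp
    rw [ENNReal.mul_inv (Or.inl hn0) (Or.inl hntop)]
    congr 1
    rw [ENNReal.mul_inv (by simp) (by simp), inv_inv, inv_inv]
  rw [hps]
  have hnum : ((2 * n + 1 : ℕ) : ℝ≥0∞) * ((n : ℝ≥0∞) * 4) ≤ ENNReal.ofReal (12 * (n : ℝ) ^ 2) := by
    have hR : (12 * (n : ℝ) ^ 2) = (((12 * n ^ 2 : ℕ) : ℝ)) := by push_cast; ring
    rw [hR, ENNReal.ofReal_natCast]
    have hcast : ((2 * n + 1 : ℕ) : ℝ≥0∞) * ((n : ℝ≥0∞) * 4)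
        = (((2 * n + 1) * (n * 4) : ℕ) : ℝ≥0∞) := by push_cast; ring
    rw [hcast]
    have hineq : (2 * n + 1) * (n * 4) ≤ 12 * n ^ 2 := by nlinarith
    exact_mod_cast hineq
  calc ((2 * n + 1 : ℕ) : ℝ≥0∞) * ((n : ℝ≥0∞) * 4 * p⁻¹)
      = ((2 * n + 1 : ℕ) : ℝ≥0∞) * ((n : ℝ≥0∞) * 4) * p⁻¹ := by ring
    _ ≤ ENNReal.ofReal (12 * (n : ℝ) ^ 2) * p⁻¹ := mul_le_mul_left hnum _
    _ = ENNReal.ofReal (12 * (n : ℝ) ^ 2) / p := by rw [div_eq_mul_inv]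


end EMO
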